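/- Let ε > 0 and let Ψ, Ψ̂ : ℝ × ℝⁿ → ℝ be C^{1,2} with Ψ > 0. Suppose ∂Ψ/∂t = −ε·ΔₓΨ (backward heat equation) and ∂Ψ̂/∂t = ε·ΔₓΨ̂ (heat equation). Then p := Ψ·Ψ̂ satisfies the Fokker–Planck equation ∂p/∂t = −∇ₓ·(p · 2ε ∇ₓ(log Ψ)) + ε·Δₓp. -/

import Mathlib

open scoped BigOperators RealInnerProductSpace

/-- Divergence of a vector field on `ℝⁿ`: `∇·F = Σᵢ ∂Fᵢ/∂xᵢ`. -/
noncomputable def diverg {n : ℕ} (F : EuclideanSpace ℝ (Fin n) → EuclideanSpace ℝ (Fin n))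
    (x : EuclideanSpace ℝ (Fin n)) : ℝ :=
  ∑ i, fderiv ℝ F x (EuclideanSpace.single i 1) i

/-- Laplacian `Δf = ∇·∇f`. -/
noncomputable def lap {n : ℕ} (f : EuclideanSpace ℝ (Fin n) → ℝ)
    (x : EuclideanSpace ℝ (Fin n)) : ℝ :=
  diverg (fun y => gradient f y) x

namespace SBAux

variable {n : ℕ}

noncomputable def e (i : Fin n) : EuclideanSpace ℝ (Fin n) := EuclideanSpace.single i 1

lemma grad_coord (f : EuclideanSpace ℝ (Fin n) → ℝ) (y : EuclideanSpace ℝ (Fin n)) (i : Fin n) :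
    gradient f y i = fderiv ℝ f y (e i) := by
  have h : ⟪(InnerProductSpace.toDual ℝ (EuclideanSpace ℝ (Fin n))).symm (fderiv ℝ f y),
      EuclideanSpace.single i 1⟫ = fderiv ℝ f y (EuclideanSpace.single i 1) :=
    InnerProductSpace.toDual_symm_apply
  rw [EuclideanSpace.inner_single_right] at h
  simpa [gradient, e] using h

lemma diff_pd {f : EuclideanSpace ℝ (Fin n) → ℝ} (hf : ContDiff ℝ 2 f) (i : Fin n) :
    Differentiable ℝ (fun y => fderiv ℝ f y (e i)) := by
  have h1 : ContDiff ℝ 1 (fderiv ℝ f) := hf.fderiv_right (by norm_num)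
  exact (ContinuousLinearMap.apply ℝ ℝ (e i)).differentiable.comp
    (h1.differentiable (by norm_num))

lemma grad_diff {f : EuclideanSpace ℝ (Fin n) → ℝ} (hf : ContDiff ℝ 2 f) :
    Differentiable ℝ (gradient f) := by
  have h1 : ContDiff ℝ 1 (fderiv ℝ f) := hf.fderiv_right (by norm_num)
  exact ((InnerProductSpace.toDual ℝ
    (EuclideanSpace ℝ (Fin n))).symm.differentiable).comp (h1.differentiable (by norm_num))

lemma diverg_eq (F : EuclideanSpace ℝ (Fin n) → EuclideanSpace ℝ (Fin n))
    (x : EuclideanSpace ℝ (Fin n)) (hF : DifferentiableAt ℝ F x) :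
    diverg F x = ∑ i, fderiv ℝ (fun y => F y i) x (e i) := by
  unfold diverg
  refine Finset.sum_congr rfl fun i _ => ?_
  have h := ((EuclideanSpace.proj (𝕜 := ℝ) i).hasFDerivAt.comp x hF.hasFDerivAt).fderiv
  have h2 : (fun y => F y i) = fun y => (EuclideanSpace.proj (𝕜 := ℝ) i) (F y) := by
    funext y; simp
  rw [h2]
  show _ = fderiv ℝ ((EuclideanSpace.proj (𝕜 := ℝ) i) ∘ F) x (e i)
  rw [h]
  simp [e]

lemma lap_eq {f : EuclideanSpace ℝ (Fin n) → ℝ} (hf : ContDiff ℝ 2 f)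
    (x : EuclideanSpace ℝ (Fin n)) :
    lap f x = ∑ i, fderiv ℝ (fun y => fderiv ℝ f y (e i)) x (e i) := by
  unfold lap
  rw [diverg_eq _ _ ((grad_diff hf) x)]
  refine Finset.sum_congr rfl fun i _ => ?_
  have h : (fun y => gradient f y i) = fun y => fderiv ℝ f y (e i) :=
    funext fun y => grad_coord f y i
  rw [h]

lemma diverg_smul_grad (c f : EuclideanSpace ℝ (Fin n) → ℝ) (hc : Differentiable ℝ c)
    (hf : ContDiff ℝ 2 f) (x : EuclideanSpace ℝ (Fin n)) :
    diverg (fun y => c y • gradient f y) x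
      = ∑ i, (c x * fderiv ℝ (fun y => fderiv ℝ f y (e i)) x (e i)
          + fderiv ℝ f x (e i) * fderiv ℝ c x (e i)) := by
  rw [diverg_eq (fun y => c y • gradient f y) _ (((hc x).smul ((grad_diff hf) x)))]
  refine Finset.sum_congr rfl fun i _ => ?_
  have h2 : (fun y => (c y • gradient f y) i) = fun y => c y * fderiv ℝ f y (e i) := by
    funext y
    simp [grad_coord f y i, PiLp.smul_apply, smul_eq_mul]
  rw [h2, fderiv_fun_mul (hc x) (diff_pd hf i x)]
  simp [smul_eq_mul]

end SBAux

open SBAux in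
/-- factorization principle, classical SB: if `Ψ > 0` solves
`∂Ψ/∂t = −ε ΔₓΨ` and `Ψ̂` solves `∂Ψ̂/∂t = ε ΔₓΨ̂`, then `p := Ψ·Ψ̂` solves the
Fokker–Planck equation `∂p/∂t = −∇ₓ·(p · 2ε∇ₓ log Ψ) + ε Δₓp`. -/
theorem stmt_6 {n : ℕ} (Ψ Ψhat : ℝ → EuclideanSpace ℝ (Fin n) → ℝ) (ε : ℝ) (hε : 0 < ε)
    (hΨ : ContDiff ℝ 2 (fun q : ℝ × EuclideanSpace ℝ (Fin n) => Ψ q.1 q.2))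
    (hΨhat : ContDiff ℝ 2 (fun q : ℝ × EuclideanSpace ℝ (Fin n) => Ψhat q.1 q.2))
    (hpos : ∀ t x, 0 < Ψ t x)
    (heatB : ∀ t x, deriv (fun τ => Ψ τ x) t = -ε * lap (Ψ t) x)
    (heatF : ∀ t x, deriv (fun τ => Ψhat τ x) t = ε * lap (Ψhat t) x) :
    ∀ t x,
      deriv (fun τ => Ψ τ x * Ψhat τ x) t
        = - diverg (fun y =>
              (Ψ t y * Ψhat t y) • ((2 * ε) • gradient (fun z => Real.log (Ψ t z)) y)) x
          + ε * lap (fun y => Ψ t y * Ψhat t y) x := by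
  intro t x
  -- spatial regularity
  have hf : ContDiff ℝ 2 (Ψ t) := by
    have := hΨ.comp (ContDiff.prodMk (contDiff_const (c := t)) contDiff_id)
    exact this
  have hg : ContDiff ℝ 2 (Ψhat t) := by
    have := hΨhat.comp (ContDiff.prodMk (contDiff_const (c := t)) contDiff_id)
    exact this
  have hfd : Differentiable ℝ (Ψ t) := hf.differentiable (by norm_num)
  have hgd : Differentiable ℝ (Ψhat t) := hg.differentiable (by norm_num)
  -- time regularity
  have htf : DifferentiableAt ℝ (fun τ => Ψ τ x) t := by
    have : ContDiff ℝ 2 (fun τ => Ψ τ x) := by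
      have := hΨ.comp (ContDiff.prodMk contDiff_id (contDiff_const (c := x)))
      exact this
    exact (this.differentiable (by norm_num)) t
  have htg : DifferentiableAt ℝ (fun τ => Ψhat τ x) t := by
    have : ContDiff ℝ 2 (fun τ => Ψhat τ x) := by
      have := hΨhat.comp (ContDiff.prodMk contDiff_id (contDiff_const (c := x)))
      exact this
    exact (this.differentiable (by norm_num)) t
  -- LHS: product rule in time
  rw [deriv_fun_mul htf htg, heatB, heatF]
  -- rewrite the vector field
  have hfield : (fun y =>
        (Ψ t y * Ψhat t y) • ((2 * ε) • gradient (fun z => Real.log (Ψ t z)) y))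
      = fun y => ((fun z => 2 * ε * Ψhat t z) y) • gradient (Ψ t) y := by
    funext y
    have hlog : HasFDerivAt (fun z => Real.log (Ψ t z)) ((Ψ t y)⁻¹ • fderiv ℝ (Ψ t) y) y :=
      (Real.hasDerivAt_log (ne_of_gt (hpos t y))).comp_hasFDerivAt y (hfd y).hasFDerivAt
    have hgl : gradient (fun z => Real.log (Ψ t z)) y = (Ψ t y)⁻¹ • gradient (Ψ t) y := by
      simp [gradient, hlog.fderiv, map_smul]
    have h0 : Ψ t y ≠ 0 := ne_of_gt (hpos t y)
    rw [hgl, smul_smul, smul_smul]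
    show _ • _ = (2 * ε * Ψhat t y) • _
    congr 1
    field_simp
  rw [hfield]
  have hc : Differentiable ℝ (fun z => 2 * ε * Ψhat t z) := by
    exact fun y => ((hgd y).const_mul (2 * ε))
  rw [diverg_smul_grad _ _ hc hf x]
  -- Laplacian of product
  rw [lap_eq (hf.mul hg) x, lap_eq hf x, lap_eq hg x]
  have hprod : ∀ i : Fin n, (fun y => fderiv ℝ (fun z => Ψ t z * Ψhat t z) y (e i))
      = fun y => Ψ t y * fderiv ℝ (Ψhat t) y (e i) + Ψhat t y * fderiv ℝ (Ψ t) y (e i) := by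
    intro i
    funext y
    rw [fderiv_fun_mul (hfd y) (hgd y)]
    simp [smul_eq_mul]
  have hlapfg : ∀ i : Fin n,
      fderiv ℝ (fun y => fderiv ℝ (fun z => Ψ t z * Ψhat t z) y (e i)) x (e i)
        = Ψ t x * fderiv ℝ (fun y => fderiv ℝ (Ψhat t) y (e i)) x (e i)
          + fderiv ℝ (Ψhat t) x (e i) * fderiv ℝ (Ψ t) x (e i)
          + (Ψhat t x * fderiv ℝ (fun y => fderiv ℝ (Ψ t) y (e i)) x (e i)
          + fderiv ℝ (Ψ t) x (e i) * fderiv ℝ (Ψhat t) x (e i)) := by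
    intro i
    rw [hprod i]
    rw [fderiv_fun_add (f := fun y => Ψ t y * fderiv ℝ (Ψhat t) y (e i))
      (g := fun y => Ψhat t y * fderiv ℝ (Ψ t) y (e i)) ((hfd x).mul (diff_pd hg i x)) ((hgd x).mul (diff_pd hf i x))]
    rw [ContinuousLinearMap.add_apply,
      fderiv_fun_mul (hfd x) (diff_pd hg i x), fderiv_fun_mul (hgd x) (diff_pd hf i x)]
    simp [smul_eq_mul]
  have hcderiv : ∀ i : Fin n, fderiv ℝ (fun z => 2 * ε * Ψhat t z) x (e i)
      = 2 * ε * fderiv ℝ (Ψhat t) x (e i) := by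
    intro i
    rw [fderiv_const_mul (hgd x) (2 * ε)]
    simp
  -- reduce to algebra on three sums
  simp only [hlapfg, hcderiv]
  set SA := ∑ i, fderiv ℝ (fun y => fderiv ℝ (Ψ t) y (e i)) x (e i) with hSA
  set SB := ∑ i, fderiv ℝ (fun y => fderiv ℝ (Ψhat t) y (e i)) x (e i) with hSB
  have h1 : ∑ i, (2 * ε * Ψhat t x * fderiv ℝ (fun y => fderiv ℝ (Ψ t) y (e i)) x (e i)
        + fderiv ℝ (Ψ t) x (e i) * (2 * ε * fderiv ℝ (Ψhat t) x (e i)))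
      = 2 * ε * Ψhat t x * SA
        + 2 * ε * ∑ i, fderiv ℝ (Ψ t) x (e i) * fderiv ℝ (Ψhat t) x (e i) := by
    rw [Finset.sum_add_distrib, hSA, Finset.mul_sum, Finset.mul_sum]
    congr 1
    exact Finset.sum_congr rfl fun i _ => by ring
  have h2 : ∑ i, (Ψ t x * fderiv ℝ (fun y => fderiv ℝ (Ψhat t) y (e i)) x (e i)
        + fderiv ℝ (Ψhat t) x (e i) * fderiv ℝ (Ψ t) x (e i)
        + (Ψhat t x * fderiv ℝ (fun y => fderiv ℝ (Ψ t) y (e i)) x (e i)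
        + fderiv ℝ (Ψ t) x (e i) * fderiv ℝ (Ψhat t) x (e i)))
      = Ψ t x * SB + Ψhat t x * SA
        + 2 * ∑ i, fderiv ℝ (Ψ t) x (e i) * fderiv ℝ (Ψhat t) x (e i) := by
    have hab : ∑ i, fderiv ℝ (Ψhat t) x (e i) * fderiv ℝ (Ψ t) x (e i)
        = ∑ i, fderiv ℝ (Ψ t) x (e i) * fderiv ℝ (Ψhat t) x (e i) :=
      Finset.sum_congr rfl fun i _ => by ring
    simp only [Finset.sum_add_distrib, ← Finset.mul_sum]
    rw [hab, hSA, hSB]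
    ring
  rw [h1, h2]
  ring
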